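/- On the flower graph, for each petal consisting of two vertices u, v, the difference (number of particles at u) − (number of particles at v) modulo 3 is invariant under all topplings. -/
import Mathlib


/-- Vertices of the flower graph with `n` petals: `none` is the central vertex and
`some (i, b)` are the two vertices of petal `i`. Each petal is a pair of vertices
joined to each other and to the center. -/
abbrev FlowerV (n : ℕ) := Option (Fin n × Bool)

/-- Toppling at vertex `x` of the flower graph, evaluated at `w`.  A petal vertex
(degree 2) sends one particle to its petal partner and one to the center; the
center (degree 2n) sends one particle to every petal vertex. -/
def flowerTopple (n : ℕ) (c : FlowerV n → ℕ) : FlowerV n → FlowerV n → ℕ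
  | some (i, b), w =>
      if w = some (i, b) then c w - 2
      else if w = some (i, !b) ∨ w = none then c w + 1
      else c w
  | none, w =>
      if w = none then c w - 2 * n else c w + 1

/-- On the flower graph, for each petal with vertices `u = some (i, true)` and
`v = some (i, false)`, the difference (particles at `u`) − (particles at `v`)
modulo 3 is invariant under all topplings. -/
theorem flower_mod_three_invariant (n : ℕ) (c : FlowerV n → ℕ) (x : FlowerV n)
    (hx : if x = none then 2 * n ≤ c x else 2 ≤ c x) :
    ∀ i : Fin n,
      ((flowerTopple n c x (some (i, true)) : ZMod 3) -
        (flowerTopple n c x (some (i, false)) : ZMod 3)) =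
      ((c (some (i, true)) : ZMod 3) - (c (some (i, false)) : ZMod 3)) := by
  intro i
  match x with
  | none =>
      simp [flowerTopple]
  | some (j, b) =>
      simp only [flowerTopple]
      by_cases hj : j = i
      · subst hj
        have h2 : 2 ≤ c (some (j, b)) := by simpa using hx
        cases b <;>
          simp [Nat.cast_sub h2] <;>
          · push_cast
            ring_nf
            rw [show (3 : ZMod 3) = 0 by decide]
            ring
      · have h1 : (some (i, true) : FlowerV n) ≠ some (j, b) := by simp [Ne.symm hj]
        have h2 : (some (i, false) : FlowerV n) ≠ some (j, b) := by simp [Ne.symm hj]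
        have h3 : (some (i, true) : FlowerV n) ≠ some (j, !b) := by simp [Ne.symm hj]
        have h4 : (some (i, false) : FlowerV n) ≠ some (j, !b) := by simp [Ne.symm hj]
        simp [h1, h2, h3, h4]
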